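/- For every integer k, there exist integers a_0, a_1, …, a_{α_t} such that N(I,n) = Σ_{i=0}^{α_t} a_i · C(n+k, i) for every positive integer n, where for an integer a and nonnegative integer i, C(a,i) = a(a−1)⋯(a−i+1)/i! denotes the generalized binomial coefficient. -/

import Mathlib

open Finset

/-- Sequences of length `ℓ` (positions `1..ℓ`) with entries in `{1,…,n}`,
encoded as functions `ℕ → ℕ` vanishing outside `[1, ℓ]`. -/
def Seqs (ℓ n : ℕ) : Set (ℕ → ℕ) :=
  {v | (∀ i ∈ Finset.Icc 1 ℓ, v i ∈ Finset.Icc 1 n) ∧ ∀ i, i ∉ Finset.Icc 1 ℓ → v i = 0}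

/-- Descent set of a sequence of length `ℓ`:
`Des(v) = {i ∈ {1,…,ℓ-1} : v_i > v_{i+1}}`. -/
def Des (ℓ : ℕ) (v : ℕ → ℕ) : Set ℕ :=
  {i | 1 ≤ i ∧ i < ℓ ∧ v (i + 1) < v i}

/-- Number of occurrences of the value `j` among positions `1..ℓ` of `v`. -/
def mult (ℓ : ℕ) (v : ℕ → ℕ) (j : ℕ) : ℕ :=
  ((Finset.Icc 1 ℓ).filter fun i => v i = j).card

/-- `𝔡^m(I, n)`: the number of sequences of length `n*m`, in which each of `1,…,n`
appears exactly `m` times, whose descent set is `I`. -/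
noncomputable def dP (m : ℕ) (I : Finset ℕ) (n : ℕ) : ℕ :=
  Set.ncard {w ∈ Seqs (n * m) n |
    Des (n * m) w = ↑I ∧ ∀ j ∈ Finset.Icc 1 n, mult (n * m) w j = m}

/-- `N(I, n)`: the number of sequences `v = (v_1, …, v_{α_t})` with entries in `{1,…,n}`
such that `Des v = I \ {α_t}` and `v_{α_t} ≠ 1`. -/
noncomputable def Ncount (I : Finset ℕ) (n : ℕ) : ℕ :=
  Set.ncard {v ∈ Seqs (I.sup id) n |
    Des (I.sup id) v = ↑(I.erase (I.sup id)) ∧ v (I.sup id) ≠ 1}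

/-- `D^m(I, n)`: the number of sequences `v = (v_1, …, v_{α_t})` with entries in `{1,…,n}`
such that `Des v = I \ {α_t}` and each of `1,…,n` appears at most `m` times in `v`. -/
noncomputable def Dcount (m : ℕ) (I : Finset ℕ) (n : ℕ) : ℕ :=
  Set.ncard {v ∈ Seqs (I.sup id) n |
    Des (I.sup id) v = ↑(I.erase (I.sup id)) ∧ ∀ j ∈ Finset.Icc 1 n, mult (I.sup id) v j ≤ m}

/-- `b_i(I)`: the number of sequences `v = (v_1, …, v_{α_t})` with entries in `{1,…,i+1}`
such that `Des v = I \ {α_t}`, every number in `{2,…,i+1}` occurs in `v`, and `v_{α_t} ≠ 1`. -/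
noncomputable def bcoef (I : Finset ℕ) (i : ℕ) : ℕ :=
  Set.ncard {v ∈ Seqs (I.sup id) (i + 1) |
    Des (I.sup id) v = ↑(I.erase (I.sup id)) ∧
    (∀ l ∈ Finset.Icc 2 (i + 1), ∃ j ∈ Finset.Icc 1 (I.sup id), v j = l) ∧
    v (I.sup id) ≠ 1}

/-- `L(I)`: the length of the longest run of consecutive integers contained in `I`. -/
def longestRun (I : Finset ℕ) : ℕ :=
  I.sup fun a => ((Finset.Icc a (I.sup id)).filter fun b => Finset.Icc a b ⊆ I).card

/-- `alphaVal I k` is the `k`-th smallest element of `I` (`1`-indexed), with `alphaVal I 0 = 0`. -/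
def alphaVal (I : Finset ℕ) (k : ℕ) : ℕ :=
  if k = 0 then 0 else (I.sort (· ≤ ·)).getD (k - 1) 0

/-- For a composition `A = (a_1,…,a_s)` of `t = |I|`, `sigmaC I A i` is
`σ_{i+1} = β_{a_1+⋯+a_i+1} + ⋯ + β_{a_1+⋯+a_{i+1}}`, where `β` is the sequence of first
differences of `(0, α_1, …, α_t)`; by telescoping this equals
`α_{a_1+⋯+a_{i+1}} - α_{a_1+⋯+a_i}`. -/
def sigmaC (I : Finset ℕ) {t : ℕ} (A : Composition t) (i : ℕ) : ℕ :=
  alphaVal I (A.sizeUpTo (i + 1)) - alphaVal I (A.sizeUpTo i)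

/-- `C(A, I)` for a composition `A = (a_1,…,a_r)`: the number of sequences
`v = (v_1, …, v_{α_t})` with entries in `{1,…,r}` such that `Des v = I \ {α_t}`
and the number `j` appears exactly `a_j` times in `v`, for each `j ∈ {1,…,r}`. -/
noncomputable def Ccount (I : Finset ℕ) {N : ℕ} (A : Composition N) : ℕ :=
  Set.ncard {v ∈ Seqs (I.sup id) A.length |
    Des (I.sup id) v = ↑(I.erase (I.sup id)) ∧
    ∀ j ∈ Finset.Icc 1 A.length, mult (I.sup id) v j = A.blocks.getD (j - 1) 0}

/-- The generalized binomial coefficient `C(a, i) = a(a-1)⋯(a-i+1)/i!` for an integer `a`. -/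
def genChoose (a : ℤ) (i : ℕ) : ℚ :=
  (∏ j ∈ Finset.range i, ((a : ℚ) - (j : ℚ))) / (Nat.factorial i)

section Algebra

lemma prod_eq_descPochhammer (x : ℚ) (j : ℕ) :
    ∏ i ∈ Finset.range j, (x - i) = (descPochhammer ℚ j).eval x := by
  induction j with
  | zero => simp
  | succ r ih => rw [Finset.prod_range_succ, ih, descPochhammer_succ_eval]

lemma genChoose_eq (m : ℤ) (j : ℕ) : genChoose m j = ((Ring.choose m j : ℤ) : ℚ) := by
  have hfac : (j.factorial : ℚ) ≠ 0 := Nat.cast_ne_zero.2 j.factorial_ne_zero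
  have hq : ∏ i ∈ Finset.range j, ((m : ℚ) - i) = (((descPochhammer ℤ j).eval m : ℤ) : ℚ) := by
    rw [descPochhammer_eval_cast, prod_eq_descPochhammer]
  have h := Ring.descPochhammer_eq_factorial_smul_choose (R := ℤ) m j
  rw [← Polynomial.eval_eq_smeval] at h
  rw [genChoose, hq, h]
  push_cast [nsmul_eq_mul]
  field_simp

lemma genChoose_add (x y : ℤ) (i : ℕ) :
    genChoose (x + y) i = ∑ p ∈ Finset.range (i + 1), genChoose x p * genChoose y (i - p) := by
  have h := Ring.add_choose_eq (R := ℤ) (r := x) (s := y) i (Commute.all x y)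
  rw [genChoose_eq, h, Finset.Nat.sum_antidiagonal_eq_sum_range_succ_mk]
  push_cast
  exact Finset.sum_congr rfl fun p _ => by rw [genChoose_eq, genChoose_eq]

end Algebra

section Comb

/-- values `≥ 2` taken by `v` on positions `1..ℓ`. -/
def Sval (ℓ : ℕ) (v : ℕ → ℕ) : Finset ℕ :=
  ((Finset.Icc 1 ℓ).image v).filter (fun x => 2 ≤ x)

lemma mem_Sval {ℓ : ℕ} {v : ℕ → ℕ} {x : ℕ} :
    x ∈ Sval ℓ v ↔ (∃ j ∈ Finset.Icc 1 ℓ, v j = x) ∧ 2 ≤ x := by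
  simp [Sval]

/-- relabeling map: the `r`-th smallest element of `S` goes to `r+2`; `1 ↦ 1`, others `↦ 0`. -/
noncomputable def phiF (S : Finset ℕ) (x : ℕ) : ℕ :=
  if h : x ∈ S then ((S.orderIsoOfFin rfl).symm ⟨x, h⟩ : ℕ) + 2 else if x = 1 then 1 else 0

/-- inverse relabeling. -/
noncomputable def psiF (S : Finset ℕ) (y : ℕ) : ℕ :=
  if h : 2 ≤ y ∧ y ≤ S.card + 1 then ((S.orderIsoOfFin rfl) ⟨y - 2, by omega⟩ : ℕ)
  else if y = 1 then 1 else 0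

variable {S : Finset ℕ} {a b x y : ℕ}

lemma phiF_one (hS2 : ∀ x ∈ S, 2 ≤ x) : phiF S 1 = 1 := by
  have : 1 ∉ S := fun h => by have := hS2 1 h; omega
  simp [phiF, this]

lemma phiF_zero (hS2 : ∀ x ∈ S, 2 ≤ x) : phiF S 0 = 0 := by
  have : 0 ∉ S := fun h => by have := hS2 0 h; omega
  simp [phiF, this]

lemma phiF_mem (h : x ∈ S) : phiF S x ∈ Finset.Icc 2 (S.card + 1) := by
  have hlt : ((S.orderIsoOfFin rfl).symm ⟨x, h⟩ : ℕ) < S.card := Fin.is_lt _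
  rw [phiF, dif_pos h, Finset.mem_Icc]
  omega

lemma phiF_lt_iff (hS2 : ∀ x ∈ S, 2 ≤ x) (ha : a = 1 ∨ a ∈ S) (hb : b = 1 ∨ b ∈ S) :
    phiF S a < phiF S b ↔ a < b := by
  rcases ha with rfl | ha <;> rcases hb with rfl | hb
  · simp
  · have h2 := hS2 b hb
    have h3 := Finset.mem_Icc.1 (phiF_mem hb)
    rw [phiF_one hS2]
    omega
  · have h2 := hS2 a ha
    have h3 := Finset.mem_Icc.1 (phiF_mem ha)
    rw [phiF_one hS2]
    omega
  · rw [phiF, dif_pos ha, phiF, dif_pos hb, add_lt_add_iff_right, ← Fin.lt_def,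
      OrderIso.lt_iff_lt, Subtype.mk_lt_mk]

lemma psiF_phiF (hS2 : ∀ x ∈ S, 2 ≤ x) (ha : a = 1 ∨ a ∈ S) : psiF S (phiF S a) = a := by
  rcases ha with rfl | h
  · rw [phiF_one hS2, psiF]
    have h0 : ¬ (2 ≤ 1 ∧ 1 ≤ S.card + 1) := by omega
    rw [dif_neg h0, if_pos rfl]
  · rw [phiF, dif_pos h]
    have hlt : ((S.orderIsoOfFin rfl).symm ⟨a, h⟩ : ℕ) < S.card := Fin.is_lt _
    rw [psiF, dif_pos ⟨by omega, by omega⟩]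
    have hfin : (⟨((S.orderIsoOfFin rfl).symm ⟨a, h⟩ : ℕ) + 2 - 2, by omega⟩ : Fin S.card)
        = (S.orderIsoOfFin rfl).symm ⟨a, h⟩ := by
      apply Fin.ext; simp
    rw [hfin, OrderIso.apply_symm_apply]

lemma psiF_mem (hy : y ∈ Finset.Icc 2 (S.card + 1)) : psiF S y ∈ S := by
  rw [Finset.mem_Icc] at hy
  rw [psiF, dif_pos ⟨hy.1, hy.2⟩]
  exact Subtype.coe_prop _

lemma psiF_one : psiF S 1 = 1 := by
  rw [psiF]
  have h0 : ¬ (2 ≤ 1 ∧ 1 ≤ S.card + 1) := by omega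
  rw [dif_neg h0, if_pos rfl]

lemma psiF_zero : psiF S 0 = 0 := by
  rw [psiF]
  have h0 : ¬ (2 ≤ 0 ∧ 0 ≤ S.card + 1) := by omega
  rw [dif_neg h0]
  simp

lemma phiF_psiF (hS2 : ∀ x ∈ S, 2 ≤ x) (hy : y = 1 ∨ y ∈ Finset.Icc 2 (S.card + 1)) :
    phiF S (psiF S y) = y := by
  rcases hy with rfl | hy
  · rw [psiF_one, phiF_one hS2]
  · rw [Finset.mem_Icc] at hy
    rw [psiF, dif_pos ⟨hy.1, hy.2⟩]
    have hm : (((S.orderIsoOfFin rfl) ⟨y - 2, by omega⟩ : {z // z ∈ S}) : ℕ) ∈ S :=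
      Subtype.coe_prop _
    rw [phiF, dif_pos hm]
    rw [Subtype.coe_eta, OrderIso.symm_apply_apply]
    simp only [Fin.val_mk]
    omega

lemma phiF_surj (hS2 : ∀ x ∈ S, 2 ≤ x) (hl : y ∈ Finset.Icc 2 (S.card + 1)) :
    ∃ x ∈ S, phiF S x = y :=
  ⟨psiF S y, psiF_mem hl, phiF_psiF hS2 (Or.inr hl)⟩

lemma Des_comp {ℓ : ℕ} {v g : ℕ → ℕ}
    (h : ∀ i, 1 ≤ i → i < ℓ → (g (v (i + 1)) < g (v i) ↔ v (i + 1) < v i)) :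
    Des ℓ (fun x => g (v x)) = Des ℓ v := by
  ext i
  simp only [Des, Set.mem_setOf_eq]
  constructor
  · rintro ⟨h1, h2, h3⟩; exact ⟨h1, h2, (h i h1 h2).1 h3⟩
  · rintro ⟨h1, h2, h3⟩; exact ⟨h1, h2, (h i h1 h2).2 h3⟩

end Comb

section Main

lemma Seqs_finite (ℓ n : ℕ) : (Seqs ℓ n).Finite := by
  classical
  have h : Seqs ℓ n ⊆ (fun f : ({x // x ∈ Finset.Icc 1 ℓ} → {x // x ∈ Finset.Icc 1 n}) =>
      fun x : ℕ => if h : x ∈ Finset.Icc 1 ℓ then (f ⟨x, h⟩ : ℕ) else 0) '' Set.univ := by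
    rintro v ⟨h1, h2⟩
    refine ⟨fun j => ⟨v j, h1 j j.2⟩, trivial, ?_⟩
    funext x
    by_cases hx : x ∈ Finset.Icc 1 ℓ
    · simp [hx]
    · simp [hx, h2 x hx]
  exact (Set.finite_univ.image _).subset h

lemma fiber_ncard (ℓ : ℕ) (hl : 1 ≤ ℓ) (J : Set ℕ) (n : ℕ) (hn : 1 ≤ n)
    (S : Finset ℕ) (hS : S ⊆ Finset.Icc 2 n) :
    {v | (v ∈ Seqs ℓ n ∧ Des ℓ v = J ∧ v ℓ ≠ 1) ∧ Sval ℓ v = S}.ncard =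
    {w ∈ Seqs ℓ (S.card + 1) | Des ℓ w = J ∧
      (∀ l ∈ Finset.Icc 2 (S.card + 1), ∃ j ∈ Finset.Icc 1 ℓ, w j = l) ∧ w ℓ ≠ 1}.ncard := by
  have hS2 : ∀ x ∈ S, 2 ≤ x := fun x hx => (Finset.mem_Icc.1 (hS hx)).1
  have hSn : ∀ x ∈ S, x ≤ n := fun x hx => (Finset.mem_Icc.1 (hS hx)).2
  set A : Set (ℕ → ℕ) := {v | (v ∈ Seqs ℓ n ∧ Des ℓ v = J ∧ v ℓ ≠ 1) ∧ Sval ℓ v = S} with hA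
  set B : Set (ℕ → ℕ) := {w ∈ Seqs ℓ (S.card + 1) | Des ℓ w = J ∧
      (∀ l ∈ Finset.Icc 2 (S.card + 1), ∃ j ∈ Finset.Icc 1 ℓ, w j = l) ∧ w ℓ ≠ 1} with hB
  have hval : ∀ v ∈ A, ∀ j ∈ Finset.Icc 1 ℓ, v j = 1 ∨ v j ∈ S := by
    rintro v ⟨⟨hseq, _, _⟩, hsv⟩ j hj
    have h1 := Finset.mem_Icc.1 (hseq.1 j hj)
    by_cases hone : v j = 1
    · exact Or.inl hone
    · right
      rw [← hsv]
      exact mem_Sval.2 ⟨⟨j, hj, rfl⟩, by omega⟩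
  have hinj : Set.InjOn (fun v => fun x => phiF S (v x)) A := by
    intro v hv v' hv' heq
    funext j
    by_cases hj : j ∈ Finset.Icc 1 ℓ
    · have h1 : psiF S (phiF S (v j)) = v j := psiF_phiF hS2 (hval v hv j hj)
      have h2 : psiF S (phiF S (v' j)) = v' j := psiF_phiF hS2 (hval v' hv' j hj)
      have h3 : phiF S (v j) = phiF S (v' j) := congrFun heq j
      rw [← h1, ← h2, h3]
    · rw [hv.1.1.2 j hj, hv'.1.1.2 j hj]
  have himg : (fun v => fun x => phiF S (v x)) '' A = B := by
    apply Set.Subset.antisymm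
    · rintro w ⟨v, hv, rfl⟩
      obtain ⟨⟨hseq, hdes, hne⟩, hsv⟩ := hv
      have hvv := hval v ⟨⟨hseq, hdes, hne⟩, hsv⟩
      beta_reduce
      refine ⟨⟨?_, ?_⟩, ?_, ?_, ?_⟩
      · intro j hj
        beta_reduce
        rcases hvv j hj with h1 | h1
        · rw [h1, phiF_one hS2, Finset.mem_Icc]; omega
        · have := Finset.mem_Icc.1 (phiF_mem h1)
          rw [Finset.mem_Icc]; omega
      · intro j hj
        beta_reduce
        rw [hseq.2 j hj, phiF_zero hS2]
      · rw [← hdes]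
        apply Des_comp
        intro i h1 h2
        exact phiF_lt_iff hS2 (hvv (i + 1) (Finset.mem_Icc.2 ⟨by omega, by omega⟩))
          (hvv i (Finset.mem_Icc.2 ⟨h1, by omega⟩))
      · intro l hlmem
        obtain ⟨x, hx, hphix⟩ := phiF_surj hS2 hlmem
        have hx2 : x ∈ Sval ℓ v := by rw [hsv]; exact hx
        obtain ⟨⟨j, hj, hvj⟩, -⟩ := mem_Sval.1 hx2
        exact ⟨j, hj, by beta_reduce; rw [hvj, hphix]⟩
      · have hℓmem : ℓ ∈ Finset.Icc 1 ℓ := Finset.mem_Icc.2 ⟨hl, le_rfl⟩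
        beta_reduce
        rcases hvv ℓ hℓmem with h1 | h1
        · exact absurd h1 hne
        · have := Finset.mem_Icc.1 (phiF_mem h1)
          omega
    · rintro w ⟨hseq, hdes, hcov, hne⟩
      have hwval : ∀ j ∈ Finset.Icc 1 ℓ, w j = 1 ∨ w j ∈ Finset.Icc 2 (S.card + 1) := by
        intro j hj
        have := Finset.mem_Icc.1 (hseq.1 j hj)
        by_cases h1 : w j = 1
        · exact Or.inl h1
        · exact Or.inr (Finset.mem_Icc.2 ⟨by omega, by omega⟩)
      refine ⟨fun x => psiF S (w x), ⟨⟨⟨?_, ?_⟩, ?_, ?_⟩, ?_⟩, ?_⟩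
      · intro j hj
        beta_reduce
        rcases hwval j hj with h1 | h1
        · rw [h1, psiF_one, Finset.mem_Icc]; omega
        · have hmem := psiF_mem h1
          rw [Finset.mem_Icc]
          exact ⟨by have := hS2 _ hmem; omega, hSn _ hmem⟩
      · intro j hj
        beta_reduce
        rw [hseq.2 j hj, psiF_zero]
      · rw [← hdes]
        apply Des_comp
        intro i h1 h2
        have ha := hwval (i + 1) (Finset.mem_Icc.2 ⟨by omega, by omega⟩)
        have hb := hwval i (Finset.mem_Icc.2 ⟨h1, by omega⟩)
        have ha' : psiF S (w (i + 1)) = 1 ∨ psiF S (w (i + 1)) ∈ S := by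
          rcases ha with h | h
          · rw [h, psiF_one]; exact Or.inl rfl
          · exact Or.inr (psiF_mem h)
        have hb' : psiF S (w i) = 1 ∨ psiF S (w i) ∈ S := by
          rcases hb with h | h
          · rw [h, psiF_one]; exact Or.inl rfl
          · exact Or.inr (psiF_mem h)
        have key := phiF_lt_iff hS2 ha' hb'
        rw [phiF_psiF hS2 ha, phiF_psiF hS2 hb] at key
        exact key.symm
      · have hℓmem : ℓ ∈ Finset.Icc 1 ℓ := Finset.mem_Icc.2 ⟨hl, le_rfl⟩
        beta_reduce
        rcases hwval ℓ hℓmem with h1 | h1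
        · exact absurd h1 hne
        · have := hS2 _ (psiF_mem h1)
          omega
      · apply Finset.ext
        intro z
        rw [mem_Sval]
        constructor
        · rintro ⟨⟨j, hj, hvj⟩, hx2⟩
          have hvj' : psiF S (w j) = z := hvj
          rcases hwval j hj with h1 | h1
          · rw [h1, psiF_one] at hvj'; omega
          · rw [← hvj']; exact psiF_mem h1
        · intro hx
          have hy : phiF S z ∈ Finset.Icc 2 (S.card + 1) := phiF_mem hx
          obtain ⟨j, hj, hwj⟩ := hcov _ hy
          refine ⟨⟨j, hj, ?_⟩, hS2 z hx⟩
          beta_reduce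
          rw [hwj, psiF_phiF hS2 (Or.inr hx)]
      · beta_reduce
        funext j
        beta_reduce
        by_cases hj : j ∈ Finset.Icc 1 ℓ
        · exact phiF_psiF hS2 (hwval j hj)
        · rw [hseq.2 j hj, psiF_zero, phiF_zero hS2]
  rw [← himg, Set.ncard_image_of_injOn hinj]

lemma bcoef_eq_zero (I : Finset ℕ) (i : ℕ) (h : I.sup id < i) : bcoef I i = 0 := by
  rw [bcoef]
  convert Set.ncard_empty (ℕ → ℕ) using 2
  rw [Set.eq_empty_iff_forall_notMem]
  rintro v ⟨hseq, hdes, hcov, hne⟩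
  have hsub : Finset.Icc 2 (i + 1) ⊆ (Finset.Icc 1 (I.sup id)).image v := by
    intro l hlm
    obtain ⟨j, hj, hvj⟩ := hcov l hlm
    exact Finset.mem_image.2 ⟨j, hj, hvj⟩
  have h1 := Finset.card_le_card hsub
  have h2 := Finset.card_image_le (s := Finset.Icc 1 (I.sup id)) (f := v)
  rw [Nat.card_Icc] at h1
  have h3 := Nat.card_Icc 1 (I.sup id)
  omega

lemma Ncount_formula (I : Finset ℕ) (hI : I.Nonempty) (hIpos : ∀ x ∈ I, 1 ≤ x)
    (n : ℕ) (hn : 1 ≤ n) :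
    Ncount I n = ∑ i ∈ Finset.range (I.sup id + 1), Nat.choose (n - 1) i * bcoef I i := by
  classical
  obtain ⟨x, hx⟩ := hI
  have hl : 1 ≤ I.sup id := le_trans (hIpos x hx) (Finset.le_sup (f := id) hx)
  set ℓ := I.sup id with hldef
  set J : Set ℕ := ↑(I.erase ℓ) with hJdef
  have hfin : {v ∈ Seqs ℓ n | Des ℓ v = J ∧ v ℓ ≠ 1}.Finite :=
    (Seqs_finite ℓ n).subset (fun v hv => hv.1)
  have hNc : Ncount I n = hfin.toFinset.card := Set.ncard_eq_toFinset_card _ hfin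
  have hmaps : ∀ v ∈ hfin.toFinset, Sval ℓ v ∈ (Finset.Icc 2 n).powerset := by
    intro v hv
    rw [Finset.mem_powerset]
    intro y hy
    rw [Set.Finite.mem_toFinset] at hv
    obtain ⟨⟨j, hj, hvj⟩, h2⟩ := mem_Sval.1 hy
    have := Finset.mem_Icc.1 (hv.1.1 j hj)
    rw [Finset.mem_Icc]
    omega
  rw [hNc, Finset.card_eq_sum_card_fiberwise hmaps]
  have hfib : ∀ S ∈ (Finset.Icc 2 n).powerset,
      (hfin.toFinset.filter (fun v => Sval ℓ v = S)).card = bcoef I S.card := by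
    intro S hS
    rw [Finset.mem_powerset] at hS
    have hcoe : ((hfin.toFinset.filter (fun v => Sval ℓ v = S)) : Set (ℕ → ℕ)) =
        {v | (v ∈ Seqs ℓ n ∧ Des ℓ v = J ∧ v ℓ ≠ 1) ∧ Sval ℓ v = S} := by
      ext v
      simp only [Finset.coe_filter, Set.mem_setOf_eq, Set.Finite.mem_toFinset]
    rw [← Set.ncard_coe_finset, hcoe, fiber_ncard ℓ hl J n hn S hS]
    rfl
  rw [Finset.sum_congr rfl hfib, Finset.sum_powerset_apply_card (f := fun m => bcoef I m)
    (x := Finset.Icc 2 n)]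
  have hcard : (Finset.Icc 2 n).card = n - 1 := by rw [Nat.card_Icc]; omega
  rw [hcard]
  simp only [smul_eq_mul]
  have e1 : (∑ m ∈ Finset.range (n - 1 + 1), (n - 1).choose m * bcoef I m)
      = ∑ m ∈ Finset.range (max (n - 1 + 1) (ℓ + 1)), (n - 1).choose m * bcoef I m :=
    Finset.sum_subset (Finset.range_subset_range.2 (le_max_left _ _)) (fun m _ hnot => by
      rw [Finset.mem_range] at hnot
      rw [Nat.choose_eq_zero_of_lt (by omega : n - 1 < m), zero_mul])
  have e2 : (∑ m ∈ Finset.range (ℓ + 1), (n - 1).choose m * bcoef I m)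
      = ∑ m ∈ Finset.range (max (n - 1 + 1) (ℓ + 1)), (n - 1).choose m * bcoef I m :=
    Finset.sum_subset (Finset.range_subset_range.2 (le_max_right _ _)) (fun m _ hnot => by
      rw [Finset.mem_range] at hnot
      rw [bcoef_eq_zero I m (by omega : I.sup id < m), mul_zero])
  rw [e1, e2]

end Main

/-- for every integer `k`, there are integers `a_0,…,a_{α_t}` such that
`N(I,n) = Σ_{i=0}^{α_t} a_i · C(n+k, i)` for every positive integer `n`, where `C(·, i)`
is the generalized binomial coefficient. -/
theorem stmt_13 (I : Finset ℕ) (hI : I.Nonempty) (hIpos : ∀ x ∈ I, 1 ≤ x) (k : ℤ) :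
    ∃ a : ℕ → ℤ, ∀ n : ℕ, 1 ≤ n →
      (Ncount I n : ℚ) =
        ∑ i ∈ Finset.range (I.sup id + 1), (a i : ℚ) * genChoose ((n : ℤ) + k) i := by
  classical
  set ℓ := I.sup id with hldef
  refine ⟨fun p => ∑ i' ∈ Finset.range (ℓ + 1), (bcoef I i' : ℤ) *
    (if p ≤ i' then Ring.choose (-(k + 1) : ℤ) (i' - p) else 0), fun n hn => ?_⟩
  rw [Ncount_formula I hI hIpos n hn]
  push_cast
  have hch : ∀ i' : ℕ, ((n - 1).choose i' : ℚ) = genChoose ((n : ℤ) - 1) i' := by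
    intro i'
    have hcast : ((n : ℤ) - 1) = ((n - 1 : ℕ) : ℤ) := by omega
    rw [hcast, genChoose_eq, Ring.choose_natCast]
    push_cast
    ring
  calc (∑ i' ∈ Finset.range (ℓ + 1), ((n - 1).choose i' : ℚ) * (bcoef I i' : ℚ))
      = ∑ i' ∈ Finset.range (ℓ + 1), (bcoef I i' : ℚ) *
          ∑ p ∈ Finset.range (ℓ + 1), (if p ≤ i' then
            genChoose ((n : ℤ) + k) p * genChoose (-(k + 1)) (i' - p) else 0) := by
        refine Finset.sum_congr rfl fun i' hi' => ?_
        rw [Finset.mem_range] at hi'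
        rw [hch i', mul_comm]
        congr 1
        have h1 : (n : ℤ) - 1 = ((n : ℤ) + k) + (-(k + 1)) := by ring
        rw [h1, genChoose_add]
        calc (∑ p ∈ Finset.range (i' + 1),
                genChoose ((n : ℤ) + k) p * genChoose (-(k + 1)) (i' - p))
            = ∑ p ∈ Finset.range (i' + 1), (if p ≤ i' then
                genChoose ((n : ℤ) + k) p * genChoose (-(k + 1)) (i' - p) else 0) :=
              Finset.sum_congr rfl fun p hp =>
                (if_pos (by rw [Finset.mem_range] at hp; omega)).symm
          _ = ∑ p ∈ Finset.range (ℓ + 1), (if p ≤ i' then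
                genChoose ((n : ℤ) + k) p * genChoose (-(k + 1)) (i' - p) else 0) :=
              Finset.sum_subset (Finset.range_subset_range.2 (by omega : i' + 1 ≤ ℓ + 1))
                (fun p _ hnp => if_neg (by rw [Finset.mem_range] at hnp; omega))
    _ = ∑ p ∈ Finset.range (ℓ + 1), (∑ i' ∈ Finset.range (ℓ + 1), (bcoef I i' : ℚ) *
          (if p ≤ i' then genChoose (-(k + 1)) (i' - p) else 0)) * genChoose ((n : ℤ) + k) p := by
        simp only [Finset.mul_sum]
        rw [Finset.sum_comm]
        refine Finset.sum_congr rfl fun p _ => ?_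
        rw [Finset.sum_mul]
        refine Finset.sum_congr rfl fun i' _ => ?_
        split_ifs <;> ring
    _ = ∑ p ∈ Finset.range (ℓ + 1), (∑ i' ∈ Finset.range (ℓ + 1), (bcoef I i' : ℚ) *
          (if p ≤ i' then ((Ring.choose (-(k + 1) : ℤ) (i' - p) : ℤ) : ℚ) else 0)) *
            genChoose ((n : ℤ) + k) p := by
        refine Finset.sum_congr rfl fun p _ => ?_
        congr 1
        refine Finset.sum_congr rfl fun i' _ => ?_
        congr 1
        split_ifs with h
        · rw [← genChoose_eq]
        · rfl
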